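/- (Main theorem: explicit formula for the encoded vertices of 𝟙−CUT(n).) Let n ≥ 3 and 1 ≤ k ≤ 2^{n−1}. Then v^n(k) = 2^{C(n−1,2)} · (k − 1) + Σ_{j=1}^{n−2} 2^{C(j,2)} · (S^{2^j}(k) − 1), where C(a,2) = a(a−1)/2 with the convention C(1,2) = 0. -/
import Mathlib


/-- Integer encoding of a binary vector (MSB first): code(x) = Σ x_j 2^(m-j). -/
def code (x : List Bool) : ℕ := x.foldl (fun a b => 2 * a + (if b then 1 else 0)) 0

/-- m-bit binary representation (MSB first) of an integer k. -/
def decode (m k : ℕ) : List Bool := (List.range m).map (fun j => k.testBit (m - 1 - j))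

/-- Agreement-indicator map: λ(x) lists 𝟙(x_i = x_j) for pairs i < j in lex order. -/
def lam : List Bool → List Bool
  | [] => []
  | a :: t => (t.map (fun b => a == b)) ++ lam t

/-- Integer-level map λ#_n. -/
def lambdaSharp (n k : ℕ) : ℕ := code (lam (decode n k))

/-- Encoded vertices of 𝟙-CUT(n): v^n(k) = λ#_n(2^(n-1) + k - 1). -/
def v (n k : ℕ) : ℕ := lambdaSharp n (2 ^ (n - 1) + k - 1)

/-- The alternating cycle function S^N(k). -/
def altCycle (N k : ℕ) : ℕ :=
  if ((k - 1) / N) % 2 = 0 then N + 1 - (k - ((k - 1) / N) * N)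
  else k - ((k - 1) / N) * N

-- auxiliary lemmas
lemma code_foldl (t : List Bool) : ∀ a : ℕ,
    t.foldl (fun a b => 2 * a + (if b then 1 else 0)) a = a * 2 ^ t.length + code t := by
  induction t with
  | nil => intro a; simp [code]
  | cons b t ih =>
    intro a
    have h0 : code (b :: t) = (2 * 0 + (if b then 1 else 0)) * 2 ^ t.length + code t := ih _
    rw [List.foldl_cons, ih, h0, List.length_cons, pow_succ]
    cases b <;> ring

lemma code_cons (b : Bool) (t : List Bool) :
    code (b :: t) = (if b then 1 else 0) * 2 ^ t.length + code t := by
  have h0 : code (b :: t) = (2 * 0 + (if b then 1 else 0)) * 2 ^ t.length + code t :=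
    code_foldl t _
  rw [h0]; ring_nf

lemma code_lt (t : List Bool) : code t < 2 ^ t.length := by
  induction t with
  | nil => simp [code]
  | cons b t ih =>
    rw [code_cons, List.length_cons, pow_succ]
    cases b <;> simp <;> omega

lemma code_append (u w : List Bool) : code (u ++ w) = code u * 2 ^ w.length + code w := by
  show (u ++ w).foldl _ 0 = _
  rw [List.foldl_append]
  exact code_foldl w _

lemma lam_length (t : List Bool) : (lam t).length = Nat.choose t.length 2 := by
  induction t with
  | nil => simp [lam]
  | cons a t ih =>
    simp [lam, ih, Nat.choose_succ_succ, Nat.choose_one_right]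

lemma code_map_not (t : List Bool) :
    code (t.map (fun c => false == c)) = 2 ^ t.length - 1 - code t := by
  induction t with
  | nil => simp [code]
  | cons a t ih =>
    have h := code_lt t
    simp only [List.map_cons]
    rw [code_cons, code_cons, ih, List.length_map, List.length_cons, pow_succ]
    cases a <;> simp <;> omega

lemma testBit_high (m x : ℕ) (hx : x < 2 ^ (m + 1)) : x.testBit m = decide (2 ^ m ≤ x) := by
  have hp : 2 ^ (m + 1) = 2 ^ m * 2 := pow_succ 2 m
  rcases Nat.lt_or_ge x (2 ^ m) with h | h
  · have hdiv : x / 2 ^ m = 0 := Nat.div_eq_of_lt h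
    rw [Nat.testBit_eq_decide_div_mod_eq, hdiv]
    simp [Nat.not_le.mpr h]
  · have hdiv : x / 2 ^ m = 1 := Nat.div_eq_of_lt_le (by omega) (by omega)
    rw [Nat.testBit_eq_decide_div_mod_eq, hdiv]
    simp [h]

lemma decode_length (m x : ℕ) : (decode m x).length = m := by simp [decode]

lemma decode_succ (m x : ℕ) : decode (m + 1) x = x.testBit m :: decode m (x % 2 ^ m) := by
  unfold decode
  rw [List.range_succ_eq_map]
  simp only [List.map_cons, List.map_map]
  refine List.cons_eq_cons.mpr ⟨by norm_num, ?_⟩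
  apply List.map_congr_left
  intro j hj
  rw [List.mem_range] at hj
  simp only [Function.comp_apply]
  have h1 : m + 1 - 1 - (j + 1) = m - 1 - j := by omega
  have h2 : m - 1 - j < m := by omega
  rw [h1, Nat.testBit_mod_two_pow]
  simp [h2]

lemma code_decode (m : ℕ) : ∀ x, x < 2 ^ m → code (decode m x) = x := by
  induction m with
  | zero => intro x hx; interval_cases x; simp [decode, code]
  | succ m ih =>
    intro x hx
    have hp : 2 ^ (m + 1) = 2 ^ m * 2 := pow_succ 2 m
    have hxm : x % 2 ^ m < 2 ^ m := Nat.mod_lt _ (pow_pos two_pos m)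
    rw [decode_succ, code_cons, decode_length, ih _ hxm, testBit_high m x hx]
    have hmod := Nat.div_add_mod x (2 ^ m)
    by_cases h : 2 ^ m ≤ x
    · have hdiv : x / 2 ^ m = 1 := Nat.div_eq_of_lt_le (by omega) (by omega)
      rw [hdiv] at hmod
      simp [h]
      omega
    · have hdiv : x / 2 ^ m = 0 := Nat.div_eq_of_lt (by omega)
      rw [hdiv] at hmod
      simp [h]
      omega

lemma altCycle_period (N k t : ℕ) (hN : 0 < N) (hk : 1 ≤ k) :
    altCycle N (k + 2 * N * t) = altCycle N k := by
  unfold altCycle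
  have e0 : 2 * N * t = 2 * t * N := by ring
  have e1 : k + 2 * N * t - 1 = (k - 1) + 2 * t * N := by omega
  rw [e1, Nat.add_mul_div_right _ _ hN]
  have hq : (k - 1) / N * N ≤ k - 1 := Nat.div_mul_le_self _ _
  have hpar : ((k - 1) / N + 2 * t) % 2 = (k - 1) / N % 2 := by omega
  rw [hpar]
  set q := (k - 1) / N
  have e2 : (q + 2 * t) * N = q * N + 2 * t * N := by ring
  split <;> omega

lemma altCycle_top (m x : ℕ) (hx : x < 2 ^ (m + 1)) :
    altCycle (2 ^ m) (x + 1) - 1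
      = if 2 ^ m ≤ x then x % 2 ^ m else 2 ^ m - 1 - x % 2 ^ m := by
  unfold altCycle
  have hp : 2 ^ (m + 1) = 2 ^ m * 2 := pow_succ 2 m
  have hmod := Nat.div_add_mod x (2 ^ m)
  simp only [Nat.add_sub_cancel]
  by_cases h : 2 ^ m ≤ x
  · have hdiv : x / 2 ^ m = 1 := Nat.div_eq_of_lt_le (by omega) (by omega)
    rw [hdiv] at hmod
    rw [hdiv, if_pos h]
    split <;> omega
  · have hdiv : x / 2 ^ m = 0 := Nat.div_eq_of_lt (by omega)
    rw [hdiv] at hmod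
    rw [hdiv, if_neg h]
    split <;> omega

lemma lam_cons (a : Bool) (t : List Bool) :
    lam (a :: t) = t.map (fun b => a == b) ++ lam t := rfl

lemma lambda_formula (m : ℕ) : ∀ x, x < 2 ^ m →
    lambdaSharp m x
      = ∑ j ∈ Finset.Icc 1 (m - 1), 2 ^ Nat.choose j 2 * (altCycle (2 ^ j) (x + 1) - 1) := by
  induction m with
  | zero => intro x hx; interval_cases x; simp [lambdaSharp, decode, lam, code]
  | succ m ih =>
    intro x hx
    have hp : 2 ^ (m + 1) = 2 ^ m * 2 := pow_succ 2 m
    have hxm : x % 2 ^ m < 2 ^ m := Nat.mod_lt _ (pow_pos two_pos m)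
    have hstep : lambdaSharp (m + 1) x =
        (if 2 ^ m ≤ x then x % 2 ^ m else 2 ^ m - 1 - x % 2 ^ m) * 2 ^ Nat.choose m 2
          + lambdaSharp m (x % 2 ^ m) := by
      show code (lam (decode (m + 1) x)) = _
      rw [decode_succ, testBit_high m x hx, lam_cons, code_append, lam_length, decode_length]
      congr 1
      by_cases h : 2 ^ m ≤ x
      · rw [if_pos h, decide_eq_true h]
        have hmap : (decode m (x % 2 ^ m)).map (fun c => (true == c)) = decode m (x % 2 ^ m) := by
          simp
        rw [hmap, code_decode m _ hxm]
      · rw [if_neg h, decide_eq_false h, code_map_not, decode_length, code_decode m _ hxm]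
    rw [hstep, ih _ hxm]
    rcases Nat.eq_zero_or_pos m with rfl | hm
    · have he : Finset.Icc 1 0 = (∅ : Finset ℕ) := Finset.Icc_eq_empty (by omega)
      simp only [Nat.pow_zero, Nat.mod_one] at *
      simp [he]
    · obtain ⟨m', rfl⟩ : ∃ m', m = m' + 1 := ⟨m - 1, by omega⟩
      rw [show m' + 1 + 1 - 1 = m' + 1 from rfl,
        Finset.sum_Icc_succ_top (by omega : 1 ≤ m' + 1),
        show m' + 1 - 1 = m' from rfl]
      have htop := altCycle_top (m' + 1) x hx
      have hsum : (∑ j ∈ Finset.Icc 1 m',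
            2 ^ Nat.choose j 2 * (altCycle (2 ^ j) (x % 2 ^ (m' + 1) + 1) - 1))
          = ∑ j ∈ Finset.Icc 1 m', 2 ^ Nat.choose j 2 * (altCycle (2 ^ j) (x + 1) - 1) := by
        apply Finset.sum_congr rfl
        intro j hj
        rw [Finset.mem_Icc] at hj
        have hAB : altCycle (2 ^ j) (x % 2 ^ (m' + 1) + 1) = altCycle (2 ^ j) (x + 1) := by
          by_cases h : 2 ^ (m' + 1) ≤ x
          · have hmod := Nat.div_add_mod x (2 ^ (m' + 1))
            have hdiv : x / 2 ^ (m' + 1) = 1 := Nat.div_eq_of_lt_le (by omega) (by omega)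
            rw [hdiv] at hmod
            have hpow : 2 * 2 ^ j * 2 ^ (m' - j) = 2 ^ (m' + 1) := by
              rw [show 2 * 2 ^ j * 2 ^ (m' - j) = 2 ^ (1 + j + (m' - j)) by
                rw [pow_add, pow_add, pow_one]]
              congr 1; omega
            rw [show x + 1 = x % 2 ^ (m' + 1) + 1 + 2 * 2 ^ j * 2 ^ (m' - j) by omega]
            rw [altCycle_period _ _ _ (pow_pos two_pos j) (by omega)]
          · rw [Nat.mod_eq_of_lt (by omega)]
        rw [hAB]
      rw [hsum, htop]
      ring

theorem stmt_17_aux (n : ℕ) (hn : 3 ≤ n) (k : ℕ) (hk : 1 ≤ k) (hk2 : k ≤ 2 ^ (n - 1)) :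
    lambdaSharp n (2 ^ (n - 1) + k - 1) = 2 ^ Nat.choose (n - 1) 2 * (k - 1)
      + ∑ j ∈ Finset.Icc 1 (n - 2), 2 ^ Nat.choose j 2 * (altCycle (2 ^ j) k - 1) := by
  have hp : 2 ^ n = 2 ^ (n - 1) * 2 := by
    rw [← pow_succ]; congr 1; omega
  have hP : 0 < 2 ^ (n - 1) := pow_pos two_pos _
  have hx : 2 ^ (n - 1) + k - 1 < 2 ^ n := by omega
  rw [lambda_formula n _ hx]
  rw [show 2 ^ (n - 1) + k - 1 + 1 = 2 ^ (n - 1) + k by omega]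
  rw [show n - 1 = (n - 2) + 1 by omega]
  rw [Finset.sum_Icc_succ_top (by omega : 1 ≤ n - 2 + 1)]
  have hk2' : k ≤ 2 ^ (n - 2 + 1) := by
    rw [show n - 2 + 1 = n - 1 by omega]; exact hk2
  have hQ : 0 < 2 ^ (n - 2 + 1) := pow_pos two_pos _
  have htop : altCycle (2 ^ (n - 2 + 1)) (2 ^ (n - 2 + 1) + k) - 1 = k - 1 := by
    unfold altCycle
    have hdiv : (2 ^ (n - 2 + 1) + k - 1) / 2 ^ (n - 2 + 1) = 1 :=
      Nat.div_eq_of_lt_le (by omega) (by omega)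
    rw [hdiv]
    split <;> omega
  have hsum : ∀ j ∈ Finset.Icc 1 (n - 2),
      2 ^ Nat.choose j 2 * (altCycle (2 ^ j) (2 ^ (n - 2 + 1) + k) - 1)
        = 2 ^ Nat.choose j 2 * (altCycle (2 ^ j) k - 1) := by
    intro j hj
    rw [Finset.mem_Icc] at hj
    have hpow : 2 * 2 ^ j * 2 ^ (n - 2 - j) = 2 ^ (n - 2 + 1) := by
      rw [show 2 * 2 ^ j * 2 ^ (n - 2 - j) = 2 ^ (1 + j + (n - 2 - j)) by
        rw [pow_add, pow_add, pow_one]]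
      congr 1; omega
    rw [show 2 ^ (n - 2 + 1) + k = k + 2 * 2 ^ j * 2 ^ (n - 2 - j) by omega]
    rw [altCycle_period _ _ _ (pow_pos two_pos j) hk]
  rw [Finset.sum_congr rfl hsum, htop]
  ring

theorem stmt_17 (n : ℕ) (hn : 3 ≤ n) (k : ℕ) (hk : 1 ≤ k) (hk2 : k ≤ 2 ^ (n - 1)) :
    v n k = 2 ^ Nat.choose (n - 1) 2 * (k - 1)
      + ∑ j ∈ Finset.Icc 1 (n - 2), 2 ^ Nat.choose j 2 * (altCycle (2 ^ j) k - 1) :=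
  stmt_17_aux n hn k hk hk2
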